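/- Let Λ > 0 and let (μ, P, H) be an admissible triple in ℝ³ whose support is contained in the closed unit ball {x ∈ ℝ³ : |x| ≤ 1}. Writing W(μ) = ∫ |H|² dμ and W_Λ(μ) = W(μ) − Λ μ(ℝ³), the following three inequalities hold: (6) W_Λ(μ) ≥ μ(ℝ³) (1 − Λ); (7) W_Λ(μ) ≥ W(μ) (1 − Λ); (8) W(μ) ≥ μ(ℝ³). -/

import Mathlib

open MeasureTheory Metric Filter
open scoped RealInnerProductSpace ENNReal

noncomputable section

/-- Euclidean three-space. -/
abbrev E3 : Type := EuclideanSpace ℝ (Fin 3)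

/-- The support of a measure: points all of whose neighbourhoods have positive measure. -/
def mSupport (μ : Measure E3) : Set E3 := {x | ∀ r > 0, 0 < μ (ball x r)}

/-- An admissible triple `(μ, P, H)`: a finite compactly supported Borel measure, a measurable
family of maps which μ-a.e. are orthogonal projections onto 2-dimensional planes (idempotent,
symmetric, of rank two), and an `L²(μ)` generalized mean curvature `H` satisfying the first
variation identity `∫ trace(P x ∘ DX x) dμ = -2 ∫ ⟨X x, H x⟩ dμ` for every compactly supported
`C¹` vector field `X`. -/
structure IsAdmissible (μ : Measure E3) (P : E3 → E3 →L[ℝ] E3) (H : E3 → E3) : Prop where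
  finite : IsFiniteMeasure μ
  compact_support : IsCompact (mSupport μ)
  meas_P : ∀ v : E3, Measurable fun x => P x v
  meas_H : AEStronglyMeasurable H μ
  proj_ae : ∀ᵐ x ∂μ, (P x).comp (P x) = P x ∧
      (∀ u v : E3, ⟪P x u, v⟫ = ⟪u, P x v⟫) ∧
      Module.finrank ℝ (LinearMap.range ((P x : E3 →ₗ[ℝ] E3))) = 2
  memL2 : MemLp H 2 μ
  first_variation : ∀ X : E3 → E3, ContDiff ℝ 1 X → HasCompactSupport X →
      ∫ x, LinearMap.trace ℝ E3 ((P x).comp (fderiv ℝ X x) : E3 →ₗ[ℝ] E3) ∂μ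
        = -2 * ∫ x, ⟪X x, H x⟫ ∂μ

/-- The generalized mean curvature is perpendicular: `(P x) (H x) = 0` for μ-a.e. `x`. -/
def IsPerp (μ : Measure E3) (P : E3 → E3 →L[ℝ] E3) (H : E3 → E3) : Prop :=
  ∀ᵐ x ∂μ, P x (H x) = 0

/-- The Willmore energy of an admissible triple. -/
def Willmore (μ : Measure E3) (H : E3 → E3) : ℝ := ∫ x, ‖H x‖ ^ 2 ∂μ

/-- The mass of a measure. -/
def Mass (μ : Measure E3) : ℝ := (μ Set.univ).toReal


/-- Almost every point lies in the measure-theoretic support. -/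
lemma ae_mem_mSupport (μ : Measure E3) : ∀ᵐ x ∂μ, x ∈ mSupport μ := by
  rw [MeasureTheory.ae_iff]
  apply measure_null_of_locally_null
  intro x hx
  simp only [mSupport, Set.mem_setOf_eq, not_forall] at hx
  obtain ⟨r, hr, hball⟩ := hx
  push_neg at hball
  refine ⟨ball x r, ?_, le_antisymm hball zero_le⟩
  exact mem_nhdsWithin_of_mem_nhds (ball_mem_nhds x hr)

/-- Key estimate: the Willmore energy dominates the mass. -/
lemma mass_le_willmore (μ : Measure E3) (P : E3 → E3 →L[ℝ] E3) (H : E3 → E3)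
    (hadm : IsAdmissible μ P H) (hsupp : mSupport μ ⊆ closedBall 0 1) :
    Mass μ ≤ Willmore μ H := by
  haveI : IsFiniteMeasure μ := hadm.finite
  have memL2 := hadm.memL2
  have proj_ae := hadm.proj_ae
  have first_variation := hadm.first_variation
  rw [Mass, Willmore]
  set M : ℝ := (μ Set.univ).toReal with hM
  set f : ContDiffBump (0 : E3) := ⟨2, 3, by norm_num, by norm_num⟩ with hf
  set X : E3 → E3 := fun x => f x • x with hX
  have hX1 : ContDiff ℝ 1 X := f.contDiff.smul contDiff_id
  have hX2 : HasCompactSupport X := f.hasCompactSupport.smul_right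
  have hball2 : ∀ x : E3, x ∈ mSupport μ → x ∈ ball (0:E3) 2 := by
    intro x hx
    have := mem_closedBall_zero_iff.mp (hsupp hx)
    exact mem_ball_zero_iff.mpr (lt_of_le_of_lt this (by norm_num))
  have hXball : ∀ x : E3, x ∈ ball (0:E3) 2 → X x = x := by
    intro x hx
    have hfx : f x = 1 := f.one_of_mem_closedBall (ball_subset_closedBall hx)
    simp [hX, hfx]
  have hfder : ∀ x : E3, x ∈ ball (0:E3) 2 → fderiv ℝ X x = ContinuousLinearMap.id ℝ E3 := by
    intro x hx
    have heq : X =ᶠ[nhds x] id := by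
      filter_upwards [isOpen_ball.mem_nhds hx] with y hy
      exact hXball y hy
    rw [heq.fderiv_eq, fderiv_id]
  -- a.e. the integrand of the first variation equals 2
  have htrace : ∀ᵐ x ∂μ,
      LinearMap.trace ℝ E3 ((P x).comp (fderiv ℝ X x) : E3 →ₗ[ℝ] E3) = (2 : ℝ) := by
    filter_upwards [proj_ae, ae_mem_mSupport μ] with x hproj hx
    obtain ⟨hidem, hsym, hrank⟩ := hproj
    rw [hfder x (hball2 x hx), ContinuousLinearMap.comp_id]
    have hP : LinearMap.IsProj (LinearMap.range ((P x : E3 →ₗ[ℝ] E3)))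
        ((P x : E3 →ₗ[ℝ] E3)) := by
      constructor
      · intro y; exact LinearMap.mem_range_self _ y
      · rintro y ⟨z, rfl⟩
        exact DFunLike.congr_fun hidem z
    rw [hP.trace, hrank]; norm_num
  -- apply the first variation identity to X
  have hfv := first_variation X hX1 hX2
  have hI1 : ∫ x, LinearMap.trace ℝ E3 ((P x).comp (fderiv ℝ X x) : E3 →ₗ[ℝ] E3) ∂μ
      = 2 * M := by
    rw [integral_congr_ae htrace, integral_const, smul_eq_mul, mul_comm, measureReal_def]
  have hMass : M = - ∫ x, ⟪X x, H x⟫ ∂μ := by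
    rw [hI1] at hfv; linarith
  -- integrability facts
  have hHint : Integrable H μ := memL2.integrable (by norm_num)
  have hHnorm : Integrable (fun x => ‖H x‖) μ := hHint.norm
  have haesm : AEStronglyMeasurable (fun x => ⟪X x, H x⟫) μ :=
    AEStronglyMeasurable.inner (hX1.continuous.aestronglyMeasurable) memL2.aestronglyMeasurable
  have hbound : ∀ᵐ x ∂μ, ‖⟪X x, H x⟫‖ ≤ ‖H x‖ := by
    filter_upwards [ae_mem_mSupport μ] with x hx
    have hx2 := hball2 x hx
    rw [hXball x hx2]
    calc ‖⟪x, H x⟫‖ ≤ ‖x‖ * ‖H x‖ := norm_inner_le_norm _ _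
      _ ≤ 1 * ‖H x‖ := by
          gcongr
          exact mem_closedBall_zero_iff.mp (hsupp hx)
      _ = ‖H x‖ := one_mul _
  have hIint : Integrable (fun x => ⟪X x, H x⟫) μ := hHnorm.mono' haesm hbound
  -- mass is at most ∫ ‖H‖
  have h1 : M ≤ ∫ x, ‖H x‖ ∂μ := by
    rw [hMass]
    calc - ∫ x, ⟪X x, H x⟫ ∂μ
        ≤ ‖∫ x, ⟪X x, H x⟫ ∂μ‖ := by rw [Real.norm_eq_abs]; exact neg_le_abs _
      _ ≤ ∫ x, ‖⟪X x, H x⟫‖ ∂μ := norm_integral_le_integral_norm _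
      _ ≤ ∫ x, ‖H x‖ ∂μ := integral_mono_ae hIint.norm hHnorm hbound
  -- ∫ ‖H‖ is at most (M + W)/2, by AM-GM
  have hsq : Integrable (fun x => ‖H x‖ ^ 2) μ := memL2.norm.integrable_sq
  have h2 : ∫ x, ‖H x‖ ∂μ ≤ (M + ∫ x, ‖H x‖ ^ 2 ∂μ) / 2 := by
    have : ∫ x, ‖H x‖ ∂μ ≤ ∫ x, (1 + ‖H x‖ ^ 2) / 2 ∂μ := by
      apply integral_mono hHnorm ((integrable_const (1:ℝ)).add hsq |>.div_const 2)
      intro x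
      simp only [Pi.add_apply]
      nlinarith [sq_nonneg (‖H x‖ - 1)]
    rw [integral_div, integral_add (integrable_const 1) hsq, integral_const] at this
    simpa [smul_eq_mul, measureReal_def, hM] using this
  linarith

/-- items (6), (7) and (8) of Corollary 1.9 of the paper, for an admissible triple
whose support is contained in the closed unit ball:
`W_Λ(μ) ≥ μ(ℝ³)(1 − Λ)`, `W_Λ(μ) ≥ W(μ)(1 − Λ)` and `W(μ) ≥ μ(ℝ³)`. -/
theorem unit_ball_inequalities (Λ : ℝ) (hΛ : 0 < Λ)
    (μ : Measure E3) (P : E3 → E3 →L[ℝ] E3) (H : E3 → E3)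
    (hadm : IsAdmissible μ P H) (hsupp : mSupport μ ⊆ closedBall 0 1) :
    Willmore μ H - Λ * Mass μ ≥ Mass μ * (1 - Λ) ∧
    Willmore μ H - Λ * Mass μ ≥ Willmore μ H * (1 - Λ) ∧
    Willmore μ H ≥ Mass μ := by
  have key : Mass μ ≤ Willmore μ H := mass_le_willmore μ P H hadm hsupp
  have hMnn : 0 ≤ Mass μ := ENNReal.toReal_nonneg
  have hLM : Λ * Mass μ ≤ Λ * Willmore μ H := by
    apply mul_le_mul_of_nonneg_left key hΛ.le
  exact ⟨by linarith, by nlinarith, key⟩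

end
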